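/- Let m ≥ 1, g : Fin m → ℝ with g i ≥ 0, P : Fin m → ℝ with P i ≥ 0, N > 0, and for i < j let ρ : Fin m → Fin m → ℂ with |ρ i j| ≤ 1. Define σ²(θ) = (∑ i, (g i)^2 * P i) + N + 2 * ∑_{i<j} g i * g j * Real.sqrt (P i * P j) * Re(ρ i j * e^{i(θ i − θ j)}). Then the infimum over θ : Fin m → ℝ of σ²(θ) is at most (∑ i, (g i)^2 * P i) + N, with equality if ρ i j = 0 for all i < j. -/

import Mathlib

open Real Complex Finset

theorem stmt_1 (m : ℕ) (hm : 1 ≤ m) (g P : Fin m → ℝ)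
    (hg : ∀ i, 0 ≤ g i) (hP : ∀ i, 0 ≤ P i) (N : ℝ) (hN : 0 < N)
    (ρ : Fin m → Fin m → ℂ) (hρ : ∀ i j, i < j → ‖ρ i j‖ ≤ 1) :
    (⨅ θ : Fin m → ℝ,
        ((∑ i, (g i) ^ 2 * P i) + N +
          2 * ∑ i, ∑ j, if i < j then
            g i * g j * Real.sqrt (P i * P j) *
              (ρ i j * Complex.exp ((θ i - θ j) * Complex.I)).re else 0))
      ≤ (∑ i, (g i) ^ 2 * P i) + N ∧
    ((∀ i j, i < j → ρ i j = 0) →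
      (⨅ θ : Fin m → ℝ,
        ((∑ i, (g i) ^ 2 * P i) + N +
          2 * ∑ i, ∑ j, if i < j then
            g i * g j * Real.sqrt (P i * P j) *
              (ρ i j * Complex.exp ((θ i - θ j) * Complex.I)).re else 0))
        = (∑ i, (g i) ^ 2 * P i) + N) := by
  classical
  set base : ℝ := (∑ i, (g i) ^ 2 * P i) + N with hbase
  set f : (Fin m → ℝ) → ℝ := fun θ =>
    base + 2 * ∑ i, ∑ j, if i < j then
      g i * g j * Real.sqrt (P i * P j) *
        (ρ i j * Complex.exp ((θ i - θ j) * Complex.I)).re else 0 with hf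
  have hc : ∀ i j : Fin m, 0 ≤ g i * g j * Real.sqrt (P i * P j) := fun i j =>
    mul_nonneg (mul_nonneg (hg i) (hg j)) (Real.sqrt_nonneg _)
  -- bound on the real part
  have hre : ∀ (i j : Fin m) (x : ℝ), i < j →
      |(ρ i j * Complex.exp (x * Complex.I)).re| ≤ 1 := by
    intro i j x hij
    calc |(ρ i j * Complex.exp (x * Complex.I)).re|
        ≤ ‖ρ i j * Complex.exp (x * Complex.I)‖ := Complex.abs_re_le_norm _
      _ = ‖ρ i j‖ * ‖Complex.exp (x * Complex.I)‖ := norm_mul _ _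
      _ = ‖ρ i j‖ := by rw [Complex.norm_exp_ofReal_mul_I, mul_one]
      _ ≤ 1 := hρ i j hij
  -- bounded below
  have hbdd : BddBelow (Set.range f) := by
    refine ⟨base - 2 * ∑ i, ∑ j, if i < j then g i * g j * Real.sqrt (P i * P j) else 0, ?_⟩
    rintro _ ⟨θ, rfl⟩
    have h1 : -(∑ i, ∑ j, if i < j then g i * g j * Real.sqrt (P i * P j) else 0)
        ≤ ∑ i, ∑ j, if i < j then
            g i * g j * Real.sqrt (P i * P j) *
              (ρ i j * Complex.exp ((θ i - θ j) * Complex.I)).re else 0 := by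
      rw [← Finset.sum_neg_distrib]
      refine Finset.sum_le_sum fun i _ => ?_
      rw [← Finset.sum_neg_distrib]
      refine Finset.sum_le_sum fun j _ => ?_
      by_cases hij : i < j
      · simp only [hij, if_true]
        have hx : ((θ i : ℂ) - (θ j : ℂ)) = ((θ i - θ j : ℝ) : ℂ) := by push_cast; ring
        have := hre i j (θ i - θ j) hij
        have hge : -1 ≤ (ρ i j * Complex.exp (((θ i - θ j : ℝ) : ℂ) * Complex.I)).re :=
          neg_le_of_abs_le this
        rw [hx]
        nlinarith [hc i j, hge]
      · simp [hij]
    simp only [hf]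
    linarith
  -- the sign functions
  set ε : Bool → ℝ := fun b => if b then -1 else 1 with hε
  set θs : (Fin m → Bool) → (Fin m → ℝ) := fun s i => if s i then Real.pi else 0 with hθs
  have key : ∀ (s : Fin m → Bool) (i j : Fin m),
      (ρ i j * Complex.exp ((θs s i - θs s j) * Complex.I)).re
        = ε (s i) * ε (s j) * (ρ i j).re := by
    intro s i j
    cases hb : s i <;> cases hb' : s j <;>
      simp [hθs, hε, hb, hb', Complex.exp_pi_mul_I, Complex.exp_neg, Complex.mul_re]
  have hnot : ∀ b : Bool, ε (!b) = -ε b := by intro b; cases b <;> simp [hε]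
  have hflip : ∀ i j : Fin m, i ≠ j → ∑ s : Fin m → Bool, ε (s i) * ε (s j) = 0 := by
    intro i j hij
    have hinv : Function.Involutive
        (fun s : Fin m → Bool => Function.update s i (!(s i))) := by
      intro s; funext k
      by_cases hk : k = i
      · subst hk; simp
      · simp [Function.update_apply, hk]
    have hcomp := Equiv.sum_comp (Function.Involutive.toPerm _ hinv)
      (fun s : Fin m → Bool => ε (s i) * ε (s j))
    have hL : ∑ s : Fin m → Bool,
        (fun s : Fin m → Bool => ε (s i) * ε (s j)) ((Function.Involutive.toPerm _ hinv) s)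
        = -∑ s : Fin m → Bool, ε (s i) * ε (s j) := by
      rw [← Finset.sum_neg_distrib]
      refine Finset.sum_congr rfl fun s _ => ?_
      simp only [Function.Involutive.toPerm, Equiv.coe_fn_mk]
      rw [Function.update_self, Function.update_of_ne (Ne.symm hij), hnot]
      ring
    rw [hL] at hcomp
    linarith
  -- the cross term at the sign points
  set T : (Fin m → Bool) → ℝ := fun s =>
    ∑ i, ∑ j, if i < j then
      g i * g j * Real.sqrt (P i * P j) * (ε (s i) * ε (s j) * (ρ i j).re) else 0 with hT
  have hTsum : ∑ s : Fin m → Bool, T s = 0 := by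
    simp only [hT]
    rw [Finset.sum_comm]
    refine Finset.sum_eq_zero fun i _ => ?_
    rw [Finset.sum_comm]
    refine Finset.sum_eq_zero fun j _ => ?_
    by_cases hij : i < j
    · simp only [hij, if_true]
      have : ∑ s : Fin m → Bool,
          g i * g j * Real.sqrt (P i * P j) * (ε (s i) * ε (s j) * (ρ i j).re)
          = (g i * g j * Real.sqrt (P i * P j) * (ρ i j).re)
              * ∑ s : Fin m → Bool, ε (s i) * ε (s j) := by
        rw [Finset.mul_sum]
        exact Finset.sum_congr rfl fun s _ => by ring
      rw [this, hflip i j (ne_of_lt hij), mul_zero]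
    · simp [hij]
  have hex : ∃ s : Fin m → Bool, T s ≤ 0 := by
    by_contra h
    push_neg at h
    have : (0 : ℝ) < ∑ s : Fin m → Bool, T s :=
      Finset.sum_pos (fun s _ => h s) Finset.univ_nonempty
    linarith [hTsum]
  obtain ⟨s₀, hs₀⟩ := hex
  have hfle : f (θs s₀) ≤ base := by
    have : f (θs s₀) = base + 2 * T s₀ := by
      simp only [hf, hT]
      congr 1
      congr 1
      refine Finset.sum_congr rfl fun i _ => Finset.sum_congr rfl fun j _ => ?_
      by_cases hij : i < j
      · simp only [hij, if_true, key s₀ i j]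
      · simp [hij]
    rw [this]; linarith
  have h1 : iInf f ≤ base := ciInf_le_of_le hbdd (θs s₀) hfle
  refine ⟨h1, ?_⟩
  intro hz
  have hconst : f = fun _ => base := by
    funext θ
    simp only [hf]
    have : (∑ i, ∑ j, if i < j then
        g i * g j * Real.sqrt (P i * P j) *
          (ρ i j * Complex.exp ((θ i - θ j) * Complex.I)).re else 0) = 0 := by
      refine Finset.sum_eq_zero fun i _ => Finset.sum_eq_zero fun j _ => ?_
      by_cases hij : i < j
      · simp [hij, hz i j hij]
      · simp [hij]
    rw [this]; ring
  show iInf f = base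
  rw [hconst, ciInf_const]
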